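/- For a binary string v of length t with exactly K ones, v_1 = a, v_t = a', the number of 'blocks' of consecutive ones (cyclically, comparing v with its shift) determines ι(v ⊕ Sv): if v has m maximal runs of ones in the linear (non-cyclic) order, then ι(v ⊕ Sv) = 2m − 2·(a·a') when both endpoints matter cyclically; in particular the count of strings with given ι(v ⊕ Sv) = 2n, v_1 = a, v_t = a' is C_{K,n+aa'}·C_{t−K,n+(1−a)(1−a')} where C denotes composition counts. -/

import Mathlib

def iota {t : ℕ} (w : Fin t → Bool) : ℕ := ∑ i, (w i).toNat

def runs {t : ℕ} (b : Bool) (v : Fin t → Bool) : ℕ :=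
  (Finset.univ.filter (fun i : Fin t => v i = b ∧
    (i.val = 0 ∨ v ⟨i.val - 1, Nat.lt_of_le_of_lt (Nat.sub_le _ _) i.isLt⟩ = !b))).card

lemma runs_sum {t : ℕ} (b : Bool) (v : Fin t → Bool) :
    runs b v = ∑ i : Fin t, if v i = b ∧
    (i.val = 0 ∨ v ⟨i.val - 1, Nat.lt_of_le_of_lt (Nat.sub_le _ _) i.isLt⟩ = !b) then 1 else 0 :=
  Finset.card_filter _ _

def Ccyc {t : ℕ} [NeZero t] (b : Bool) (v : Fin t → Bool) : ℕ :=
  ∑ i : Fin t, if v i = !b ∧ v (i + 1) = b then 1 else 0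

lemma sum_shift {t : ℕ} [NeZero t] (f : Fin t → ℕ) : ∑ i, f (i + 1) = ∑ i, f i := by
  have := Equiv.sum_comp (Equiv.addRight (1 : Fin t)) f
  simpa using this

lemma Ccyc_tf {t : ℕ} [NeZero t] (v : Fin t → Bool) : Ccyc true v = Ccyc false v := by
  have e1 : ∑ i : Fin t, (if v (i+1) = true then (1:ℕ) else 0)
      = ∑ i : Fin t, (if v i = true then 1 else 0) := sum_shift (fun i => if v i = true then 1 else 0)
  have A : Ccyc true v + ∑ i : Fin t, (if v i = true ∧ v (i+1) = true then (1:ℕ) else 0)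
      = ∑ i : Fin t, (if v (i+1) = true then 1 else 0) := by
    rw [Ccyc, ← Finset.sum_add_distrib]
    refine Finset.sum_congr rfl fun i _ => ?_
    cases h : v i <;> cases h' : v (i+1) <;> simp [h, h']
  have B : Ccyc false v + ∑ i : Fin t, (if v i = true ∧ v (i+1) = true then (1:ℕ) else 0)
      = ∑ i : Fin t, (if v i = true then 1 else 0) := by
    rw [Ccyc, ← Finset.sum_add_distrib]
    refine Finset.sum_congr rfl fun i _ => ?_
    cases h : v i <;> cases h' : v (i+1) <;> simp [h, h']
  omega

lemma iota_xor {t : ℕ} [NeZero t] (v : Fin t → Bool) :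
    iota (fun i => xor (v i) (v (i + 1))) = Ccyc true v + Ccyc false v := by
  rw [iota, Ccyc, Ccyc, ← Finset.sum_add_distrib]
  refine Finset.sum_congr rfl fun i _ => ?_
  cases h : v i <;> cases h' : v (i+1) <;> simp [h, h']

lemma mk_mod {s : ℕ} (i : Fin (s+2)) (h : (i.val + 1) % (s+2) < s+2) :
    (⟨(i.val + 1) % (s+2), h⟩ : Fin (s+2)) = i + 1 := by
  ext
  rw [Fin.val_add, Fin.val_one]

lemma runs_eq_Ccyc {s : ℕ} (b : Bool) (v : Fin (s+2) → Bool) :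
    runs b v = Ccyc b v + (if v 0 = b ∧ v ⟨s+1, by omega⟩ = b then 1 else 0) := by
  set F : Fin (s+2) → ℕ := fun j => if v (j-1) = !b ∧ v j = b then 1 else 0 with hF
  have hC : Ccyc b v = ∑ j, F j := by
    rw [← sum_shift F, Ccyc]
    refine Finset.sum_congr rfl fun i _ => ?_
    simp only [hF, add_sub_cancel_right]
  have h0 : (0 : Fin (s+2)) ∈ Finset.univ := Finset.mem_univ _
  rw [runs_sum, hC, ← Finset.add_sum_erase _ _ h0, ← Finset.add_sum_erase _ _ h0]
  have hrest : ∀ j ∈ Finset.univ.erase (0 : Fin (s+2)),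
      (if v j = b ∧ (j.val = 0 ∨ v ⟨j.val - 1, Nat.lt_of_le_of_lt (Nat.sub_le _ _) j.isLt⟩ = !b)
        then (1:ℕ) else 0) = F j := by
    intro j hj
    have hj0 : j ≠ 0 := Finset.ne_of_mem_erase hj
    have hv : (j.val : ℕ) ≠ 0 := fun h => hj0 (Fin.ext h)
    have hsub : (j - 1 : Fin (s+2)) = ⟨j.val - 1, Nat.lt_of_le_of_lt (Nat.sub_le _ _) j.isLt⟩ := by
      ext
      rw [Fin.coe_sub_one, if_neg hj0]
    rw [hF]
    simp only [hsub, hv, false_or]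
    exact if_congr and_comm rfl rfl
  rw [Finset.sum_congr rfl hrest]
  have hF0 : F 0 = if v ⟨s+1, by omega⟩ = !b ∧ v 0 = b then 1 else 0 := by
    have : (0 - 1 : Fin (s+2)) = ⟨s+1, by omega⟩ := by
      ext
      rw [Fin.coe_sub_one, if_pos rfl]
    simp only [hF, this]
  rw [hF0]
  simp only [Fin.val_zero, true_or, and_true]
  cases hb : v 0 <;> cases hb' : v ⟨s+1, by omega⟩ <;> cases b <;> simp <;> exact add_comm _ _

/-- The number of compositions of `K` into `m` positive parts. -/
def Ccomp (K m : ℕ) : ℕ :=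
  if K = 0 ∧ m = 0 then 1 else if 0 < m ∧ m ≤ K then (K - 1).choose (m - 1) else 0

lemma Ccomp_zero_right {K : ℕ} (h : 1 ≤ K) : Ccomp K 0 = 0 := by
  simp [Ccomp]; omega

lemma Ccomp_lt {K M : ℕ} (h : K < M) : Ccomp K M = 0 := by
  simp only [Ccomp]
  rw [if_neg (by omega), if_neg (by omega)]

lemma Ccomp_zero_left (m : ℕ) : Ccomp 0 m = if m = 0 then 1 else 0 := by
  rcases m with _|m <;> simp [Ccomp]

lemma Ccomp_one_left (m : ℕ) : Ccomp 1 m = if m = 1 then 1 else 0 := by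
  rcases m with _|_|m <;> simp [Ccomp]

lemma Ccomp_succ_succ (K M : ℕ) : Ccomp (K+1) (M+1) = Ccomp K (M+1) + Ccomp K M := by
  rcases K with _|K
  · rcases M with _|M <;> simp [Ccomp]
  · rcases M with _|M
    · simp [Ccomp]
    · by_cases h : M + 2 ≤ K + 2
      · by_cases h2 : M + 2 ≤ K + 1
        · simp only [Ccomp]
          rw [if_neg (by omega), if_pos (by omega), if_neg (by omega), if_pos (by omega),
            if_neg (by omega), if_pos (by omega)]
          show (K+1).choose (M+1) = K.choose (M+1) + K.choose M
          rw [Nat.choose_succ_succ']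
          exact add_comm _ _
        · have hMK : M = K := by omega
          subst hMK
          simp only [Ccomp]
          rw [if_neg (by omega), if_pos (by omega), if_neg (by omega), if_neg (by omega),
            if_neg (by omega), if_pos (by omega)]
          show (M+1).choose (M+1) = 0 + M.choose M
          simp
      · simp only [Ccomp]
        rw [if_neg (by omega), if_neg (by omega), if_neg (by omega), if_neg (by omega),
          if_neg (by omega), if_neg (by omega)]

lemma vcast {t : ℕ} (v : Fin t → Bool) {i j : ℕ} (hi : i < t) (hj : j < t) (h : i = j) :
    v ⟨i, hi⟩ = v ⟨j, hj⟩ := by subst h; rfl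

lemma iota_succ {t : ℕ} (v : Fin (t+1) → Bool) :
    iota v = (v 0).toNat + iota (Fin.tail v) := by
  rw [iota, Fin.sum_univ_succ]; rfl

lemma iota_le {t : ℕ} (v : Fin t → Bool) : iota v ≤ t := by
  calc iota v ≤ ∑ _i : Fin t, 1 := Finset.sum_le_sum (fun i _ => Bool.toNat_le _)
  _ = t := by simp

lemma iota_pos {t : ℕ} (v : Fin (t+1) → Bool) (h : v 0 = true) : 1 ≤ iota v := by
  rw [iota_succ, h]; simp

lemma runs_pos {t : ℕ} (b : Bool) (v : Fin (t+1) → Bool) (h : v 0 = b) : 1 ≤ runs b v := by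
  rw [runs_sum]
  have h0 : (if v 0 = b ∧ ((0:Fin (t+1)).val = 0 ∨ v ⟨(0:Fin (t+1)).val - 1,
      Nat.lt_of_le_of_lt (Nat.sub_le _ _) (0:Fin (t+1)).isLt⟩ = !b) then (1:ℕ) else 0) = 1 := by
    rw [if_pos ⟨h, Or.inl rfl⟩]
  calc (1:ℕ) = _ := h0.symm
  _ ≤ _ := Finset.single_le_sum (f := fun i : Fin (t+1) => if v i = b ∧ (i.val = 0 ∨
      v ⟨i.val - 1, Nat.lt_of_le_of_lt (Nat.sub_le _ _) i.isLt⟩ = !b) then (1:ℕ) else 0)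
      (fun _ _ => Nat.zero_le _) (Finset.mem_univ 0)

lemma runs_tail {s : ℕ} (b : Bool) (v : Fin (s+2) → Bool) :
    runs b v = runs b (Fin.tail v) + (if v 0 = b ∧ v 1 = !b then 1 else 0) := by
  rw [runs_sum, runs_sum, Fin.sum_univ_succ, Fin.sum_univ_succ, Fin.sum_univ_succ]
  have hrest : ∀ k : Fin s,
      (if v k.succ.succ = b ∧ ((k.succ.succ : Fin (s+2)).val = 0 ∨
        v ⟨(k.succ.succ : Fin (s+2)).val - 1, Nat.lt_of_le_of_lt (Nat.sub_le _ _) (k.succ.succ : Fin (s+2)).isLt⟩ = !b) then (1:ℕ) else 0)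
      = (if Fin.tail v k.succ = b ∧ ((k.succ : Fin (s+1)).val = 0 ∨
        Fin.tail v ⟨(k.succ : Fin (s+1)).val - 1, Nat.lt_of_le_of_lt (Nat.sub_le _ _) (k.succ : Fin (s+1)).isLt⟩ = !b) then (1:ℕ) else 0) := by
    intro k
    have e1 : Fin.tail v k.succ = v k.succ.succ := rfl
    have e2 : Fin.tail v ⟨(k.succ : Fin (s+1)).val - 1, Nat.lt_of_le_of_lt (Nat.sub_le _ _) (k.succ : Fin (s+1)).isLt⟩
        = v ⟨(k.succ.succ : Fin (s+2)).val - 1, Nat.lt_of_le_of_lt (Nat.sub_le _ _) (k.succ.succ : Fin (s+2)).isLt⟩ := by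
      show v (Fin.succ _) = _
      apply vcast
      simp
    rw [e1, e2]
    refine if_congr (and_congr_right fun _ => or_congr_left ?_) rfl rfl
    simp
  rw [Finset.sum_congr rfl (fun k _ => hrest k)]
  have h0 : (if v 0 = b ∧ ((0:Fin (s+2)).val = 0 ∨ v ⟨(0:Fin (s+2)).val - 1, Nat.lt_of_le_of_lt (Nat.sub_le _ _) (0:Fin (s+2)).isLt⟩ = !b) then (1:ℕ) else 0)
      = if v 0 = b then 1 else 0 := by
    refine if_congr ?_ rfl rfl
    simp
  have h1 : (if v (0:Fin (s+1)).succ = b ∧ (((0:Fin (s+1)).succ : Fin (s+2)).val = 0 ∨ v ⟨((0:Fin (s+1)).succ : Fin (s+2)).val - 1, Nat.lt_of_le_of_lt (Nat.sub_le _ _) ((0:Fin (s+1)).succ : Fin (s+2)).isLt⟩ = !b) then (1:ℕ) else 0)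
      = if v 1 = b ∧ v 0 = !b then 1 else 0 := by
    have e1 : v (0:Fin (s+1)).succ = v 1 := by apply congrArg; ext; simp
    have e2 : v ⟨((0:Fin (s+1)).succ : Fin (s+2)).val - 1, Nat.lt_of_le_of_lt (Nat.sub_le _ _) ((0:Fin (s+1)).succ : Fin (s+2)).isLt⟩ = v 0 := by
      apply congrArg; ext; simp
    rw [e1, e2]
    refine if_congr (and_congr_right fun _ => ?_) rfl rfl
    simp
  have h2 : (if Fin.tail v (0:Fin (s+1)) = b ∧ (((0:Fin (s+1))).val = 0 ∨ Fin.tail v ⟨((0:Fin (s+1))).val - 1, Nat.lt_of_le_of_lt (Nat.sub_le _ _) ((0:Fin (s+1))).isLt⟩ = !b) then (1:ℕ) else 0)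
      = if v 1 = b then 1 else 0 := by
    have e1 : Fin.tail v (0:Fin (s+1)) = v 1 := by
      show v (Fin.succ 0) = v 1
      apply congrArg; ext; simp
    rw [e1]
    refine if_congr ?_ rfl rfl
    simp
  rw [h0, h1, h2]
  cases hb : v 0 <;> cases hb' : v 1 <;> cases b <;> simp <;> omega

lemma zero_eq {n : ℕ} (h : 0 < n+1) : (⟨0, h⟩ : Fin (n+1)) = 0 := by ext; simp

lemma pred_iff {s K M M0 : ℕ} {a a' p : Bool} (hK : a.toNat ≤ K)
    (hM : (a && !p).toNat ≤ M) (hM0 : ((!a) && p).toNat ≤ M0)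
    (v : Fin (s+2) → Bool) (hv0 : v 0 = a) :
    ((iota v = K ∧ v ⟨0, by omega⟩ = a ∧ v ⟨s+1, by omega⟩ = a' ∧
        runs true v = M ∧ runs false v = M0) ∧ v 1 = p)
    ↔ (iota (Fin.tail v) = K - a.toNat ∧ Fin.tail v ⟨0, by omega⟩ = p ∧
        Fin.tail v ⟨s, by omega⟩ = a' ∧ runs true (Fin.tail v) = M - (a && !p).toNat ∧
        runs false (Fin.tail v) = M0 - ((!a) && p).toNat) := by
  have e0 : (⟨0, by omega⟩ : Fin (s+2)) = 0 := zero_eq _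
  have etail0 : Fin.tail v ⟨0, by omega⟩ = v 1 := by
    show v (Fin.succ ⟨0, by omega⟩) = v 1
    apply congrArg; ext; simp
  have etails : Fin.tail v ⟨s, by omega⟩ = v ⟨s+1, by omega⟩ := by
    show v (Fin.succ ⟨s, by omega⟩) = _
    apply congrArg; ext; simp
  constructor
  · rintro ⟨⟨h1, h2, h3, h4, h5⟩, h6⟩
    rw [iota_succ, hv0] at h1
    rw [runs_tail true v, hv0, h6] at h4
    rw [runs_tail false v, hv0, h6] at h5
    refine ⟨by omega, by rw [etail0, h6], by rw [etails, h3], ?_, ?_⟩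
    · cases a <;> cases p <;> simp at h4 hM ⊢ <;> omega
    · cases a <;> cases p <;> simp at h5 hM0 ⊢ <;> omega
  · rintro ⟨h1, h2, h3, h4, h5⟩
    have h6 : v 1 = p := by rw [← etail0, h2]
    refine ⟨⟨?_, by rw [e0, hv0], by rw [← etails, h3], ?_, ?_⟩, h6⟩
    · rw [iota_succ, hv0, h1]; cases a <;> simp at hK ⊢ <;> omega
    · rw [runs_tail true v, hv0, h6, h4]
      cases a <;> cases p <;> simp at hM ⊢ <;> omega
    · rw [runs_tail false v, hv0, h6, h5]
      cases a <;> cases p <;> simp at hM0 ⊢ <;> omega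

lemma step_card (s K M M0 : ℕ) (a a' p : Bool) (hK : a.toNat ≤ K)
    (hM : (a && !p).toNat ≤ M) (hM0 : ((!a) && p).toNat ≤ M0) :
    (Finset.univ.filter (fun v : Fin (s+2) → Bool =>
      (iota v = K ∧ v ⟨0, by omega⟩ = a ∧ v ⟨s+1, by omega⟩ = a' ∧
        runs true v = M ∧ runs false v = M0) ∧ v 1 = p)).card
    = (Finset.univ.filter (fun w : Fin (s+1) → Bool =>
      iota w = K - a.toNat ∧ w ⟨0, by omega⟩ = p ∧ w ⟨s, by omega⟩ = a' ∧
      runs true w = M - (a && !p).toNat ∧ runs false w = M0 - ((!a) && p).toNat)).card := by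
  refine Finset.card_bij' (fun v _ => Fin.tail v) (fun w _ => Fin.cons a w) ?_ ?_ ?_ ?_
  · intro v hv
    rw [Finset.mem_filter] at hv ⊢
    have hv0 : v 0 = a := by rw [← zero_eq (by omega : 0 < s+2)]; exact hv.2.1.2.1
    exact ⟨Finset.mem_univ _, (pred_iff hK hM hM0 v hv0).1 hv.2⟩
  · intro w hw
    rw [Finset.mem_filter] at hw ⊢
    have h0 : (Fin.cons a w : Fin (s+2) → Bool) 0 = a := rfl
    refine ⟨Finset.mem_univ _, (pred_iff hK hM hM0 _ h0).2 ?_⟩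
    rw [Fin.tail_cons]
    exact hw.2
  · intro v hv
    rw [Finset.mem_filter] at hv
    have hv0 : v 0 = a := by rw [← zero_eq (by omega : 0 < s+2)]; exact hv.2.1.2.1
    show Fin.cons a (Fin.tail v) = v
    rw [← hv0]
    exact Fin.cons_self_tail v
  · intro w _
    exact Fin.tail_cons (α := fun _ : Fin (s+2) => Bool) a w

lemma key_aux {P : (Fin 1 → Bool) → Prop} [DecidablePred P] :
    (Finset.univ.filter P).card
      = (if P (fun _ => true) then 1 else 0) + (if P (fun _ => false) then 1 else 0) := by
  rw [Finset.card_filter]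
  rw [← Fintype.sum_equiv (Equiv.funUnique (Fin 1) Bool).symm
      (fun b => if P (fun _ => b) then 1 else 0) (fun v => if P v then 1 else 0)
      (fun b => rfl)]
  exact Fintype.sum_bool _

lemma core : ∀ (t : ℕ) (ht : 1 ≤ t) (K : ℕ) (hK : K ≤ t) (a a' : Bool) (M M0 : ℕ)
    (hcon : M + 1 = M0 + a.toNat + a'.toNat),
    (Finset.univ.filter (fun v : Fin t → Bool =>
      iota v = K ∧ v ⟨0, by omega⟩ = a ∧ v ⟨t - 1, by omega⟩ = a' ∧
      runs true v = M ∧ runs false v = M0)).card = Ccomp K M * Ccomp (t - K) M0 := by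
  intro t ht
  induction t, ht using Nat.le_induction with
  | base =>
    intro K hK a a' M M0 hcon
    simp only [Nat.sub_self]
    rw [key_aux]
    have it : iota (fun _ : Fin 1 => true) = 1 := by decide
    have if_ : iota (fun _ : Fin 1 => false) = 0 := by decide
    have rtt : runs true (fun _ : Fin 1 => true) = 1 := by decide
    have rft : runs false (fun _ : Fin 1 => true) = 0 := by decide
    have rtf : runs true (fun _ : Fin 1 => false) = 0 := by decide
    have rff : runs false (fun _ : Fin 1 => false) = 1 := by decide
    simp only [it, if_, rtt, rft, rtf, rff]
    interval_cases K
    · rw [Ccomp_zero_left, Ccomp_one_left]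
      cases a <;> cases a' <;>
        simp only [Bool.toNat_false, Bool.toNat_true] at hcon ⊢ <;>
        simp <;> (try split_ifs) <;> omega
    · rw [Ccomp_one_left, Ccomp_zero_left]
      cases a <;> cases a' <;>
        simp only [Bool.toNat_false, Bool.toNat_true] at hcon ⊢ <;>
        simp <;> (try split_ifs) <;> omega
  | succ t ht ih =>
    intro K hK a a' M M0 hcon
    obtain ⟨s, rfl⟩ : ∃ s, t = s + 1 := ⟨t - 1, by omega⟩
    simp only [Nat.add_sub_cancel] at hK hcon ⊢
    simp only [show s + 1 + 1 = s + 2 from rfl] at hK hcon ⊢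
    have hato : a.toNat ≤ 1 := by cases a <;> simp
    have ha'to : a'.toNat ≤ 1 := by cases a' <;> simp
    -- special degenerate cases
    by_cases hc1 : a = true ∧ K = 0
    · obtain ⟨rfl, rfl⟩ := hc1
      simp only [Bool.toNat_true] at hcon
      rw [Finset.filter_eq_empty_iff.2 ?_, Finset.card_empty]
      · rcases Nat.eq_zero_or_pos M with hM | hM
        · subst hM
          have hM0 : M0 = 0 := by omega
          subst hM0
          rw [Nat.sub_zero, Ccomp_zero_right (by omega : 1 ≤ s+2), Nat.mul_zero]
        · rw [Ccomp_lt hM, Nat.zero_mul]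
      · rintro v - ⟨h1, h2, -⟩
        have hv : v 0 = true := by rw [← zero_eq (by omega : 0 < s+2)]; exact h2
        have := iota_pos v hv
        omega
    by_cases hc2 : a = false ∧ K = s + 2
    · obtain ⟨rfl, rfl⟩ := hc2
      simp only [Bool.toNat_false] at hcon
      rw [Finset.filter_eq_empty_iff.2 ?_, Finset.card_empty]
      · rcases Nat.eq_zero_or_pos M0 with hM0 | hM0
        · subst hM0
          have hM : M = 0 := by omega
          subst hM
          rw [Ccomp_zero_right (by omega : 1 ≤ s+2), Nat.zero_mul]
        · rw [Nat.sub_self, Ccomp_zero_left, if_neg (by omega), Nat.mul_zero]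
      · rintro v - ⟨h1, h2, -⟩
        have hv0 : v 0 = false := by rw [← zero_eq (by omega : 0 < s+2)]; exact h2
        have h1' : (v 0).toNat + iota (Fin.tail v) = s + 2 := by rw [← iota_succ, h1]
        have := iota_le (Fin.tail v)
        rw [hv0] at h1'
        simp only [Bool.toNat_false] at h1'
        omega
    by_cases hc3 : a = true ∧ M = 0
    · obtain ⟨rfl, rfl⟩ := hc3
      have hK1 : 1 ≤ K := by
        rcases Nat.eq_zero_or_pos K with h | h
        · exact absurd ⟨rfl, h⟩ hc1
        · exact h
      rw [Finset.filter_eq_empty_iff.2 ?_, Finset.card_empty]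
      · rw [Ccomp_zero_right hK1, Nat.zero_mul]
      · rintro v - ⟨-, h2, -, h4, -⟩
        have hv : v 0 = true := by rw [← zero_eq (by omega : 0 < s+2)]; exact h2
        have := runs_pos true v hv
        omega
    by_cases hc4 : a = false ∧ M0 = 0
    · obtain ⟨rfl, rfl⟩ := hc4
      have hKs : K ≤ s + 1 := by
        rcases Nat.lt_or_ge K (s+2) with h | h
        · omega
        · exact absurd ⟨rfl, by omega⟩ hc2
      rw [Finset.filter_eq_empty_iff.2 ?_, Finset.card_empty]
      · rw [Ccomp_zero_right (by omega : 1 ≤ s + 2 - K), Nat.mul_zero]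
      · rintro v - ⟨-, h2, -, -, h5⟩
        have hv : v 0 = false := by rw [← zero_eq (by omega : 0 < s+2)]; exact h2
        have := runs_pos false v hv
        omega
    -- main case: split by v 1
    have hsplit : ∀ (P : (Fin (s+2) → Bool) → Prop) (hP : DecidablePred P),
        (Finset.univ.filter P).card
        = (Finset.univ.filter (fun v => P v ∧ v 1 = true)).card
          + (Finset.univ.filter (fun v => P v ∧ v 1 = false)).card := by
      intro P hP
      rw [← Finset.filter_filter, ← Finset.filter_filter]
      have e : (Finset.univ.filter P).filter (fun v => ¬ v 1 = true)
          = (Finset.univ.filter P).filter (fun v => v 1 = false) := by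
        apply Finset.filter_congr
        intro v _
        simp [Bool.not_eq_true]
      rw [← e]
      exact (Finset.card_filter_add_card_filter_not
        (fun v : Fin (s+2) → Bool => v 1 = true)).symm
    have p0 : (0:ℕ) < s + 2 := by omega
    have ps : s + 1 < s + 2 := by omega
    have hmain := hsplit (fun v : Fin (s+2) → Bool => iota v = K ∧ v ⟨0, p0⟩ = a ∧
      v ⟨s+1, ps⟩ = a' ∧ runs true v = M ∧ runs false v = M0) inferInstance
    rw [hmain]
    clear hmain hsplit
    cases a
    · -- a = false : K ≤ s+1, M0 ≥ 1
      simp only [Bool.toNat_false] at hcon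
      have hKs : K ≤ s + 1 := by
        rcases Nat.lt_or_ge K (s+2) with h | h
        · omega
        · exact absurd ⟨rfl, by omega⟩ hc2
      obtain ⟨m0, rfl⟩ : ∃ m0, M0 = m0 + 1 := by
        rcases Nat.eq_zero_or_pos M0 with h | h
        · exact absurd ⟨rfl, h⟩ hc4
        · exact ⟨M0 - 1, by omega⟩
      rw [step_card s K M (m0+1) false a' true (by simp) (by simp) (by simp)]
      rw [step_card s K M (m0+1) false a' false (by simp) (by simp) (by simp)]
      simp only [Bool.toNat_false, Nat.sub_zero, Bool.not_false, Bool.true_and,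
        Bool.and_true, Bool.and_false, Bool.false_and, Bool.not_true,
        Bool.toNat_true, Nat.add_sub_cancel]
      have hcon1 : M + 1 = m0 + Bool.toNat true + Bool.toNat a' := by
        simp only [Bool.toNat_true, Bool.toNat_false] at hcon ⊢
        omega
      have hcon2 : M + 1 = (m0+1) + Bool.toNat false + Bool.toNat a' := by
        simp only [Bool.toNat_true, Bool.toNat_false] at hcon ⊢
        omega
      have ih1 := ih K hKs true a' M m0 hcon1
      have ih2 := ih K hKs false a' M (m0+1) hcon2
      simp only [Nat.add_sub_cancel] at ih1 ih2
      rw [ih1, ih2]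
      have e1 : s + 2 - K = (s + 1 - K) + 1 := Nat.succ_sub hKs
      rw [e1, Ccomp_succ_succ, Nat.mul_add]
      exact add_comm _ _
    · -- a = true : K ≥ 1, M ≥ 1
      simp only [Bool.toNat_true] at hcon
      have hK1 : 1 ≤ K := by
        rcases Nat.eq_zero_or_pos K with h | h
        · exact absurd ⟨rfl, h⟩ hc1
        · exact h
      obtain ⟨k, rfl⟩ : ∃ k, K = k + 1 := ⟨K - 1, by omega⟩
      obtain ⟨m, rfl⟩ : ∃ m, M = m + 1 := by
        rcases Nat.eq_zero_or_pos M with h | h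
        · exact absurd ⟨rfl, h⟩ hc3
        · exact ⟨M - 1, by omega⟩
      rw [step_card s (k+1) (m+1) M0 true a' true (by simp) (by simp) (by simp)]
      rw [step_card s (k+1) (m+1) M0 true a' false (by simp) (by simp) (by simp)]
      simp only [Bool.toNat_true, Bool.toNat_false, Nat.sub_zero, Bool.not_true,
        Bool.not_false, Bool.true_and, Bool.and_false, Bool.and_true, Bool.false_and,
        Nat.add_sub_cancel]
      have hcon1 : (m+1) + 1 = M0 + Bool.toNat true + Bool.toNat a' := by
        simp only [Bool.toNat_true, Bool.toNat_false] at hcon ⊢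
        omega
      have hcon2 : m + 1 = M0 + Bool.toNat false + Bool.toNat a' := by
        simp only [Bool.toNat_true, Bool.toNat_false] at hcon ⊢
        omega
      have hk1 : k ≤ s + 1 := by omega
      have ih1 := ih k hk1 true a' (m+1) M0 hcon1
      have ih2 := ih k hk1 false a' m M0 hcon2
      simp only [Nat.add_sub_cancel] at ih1 ih2
      rw [ih1, ih2]
      have e1 : s + 2 - (k + 1) = (s + 1 - k) := Nat.succ_sub_succ (s+1) k
      rw [e1, Ccomp_succ_succ, Nat.add_mul]

theorem stmt19 (t K n : ℕ) (ht : 2 ≤ t) (hK : K ≤ t) (a a' : Bool) :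
    (∀ v : Fin t → Bool, iota v = K → v ⟨0, by omega⟩ = a → v ⟨t - 1, by omega⟩ = a' →
      iota (fun i => xor (v i) (v ⟨(i.val + 1) % t, Nat.mod_lt _ (by omega)⟩)) =
        2 * (Finset.univ.filter (fun i : Fin t => v i = true ∧
              (i.val = 0 ∨ v ⟨i.val - 1, Nat.lt_of_le_of_lt (Nat.sub_le _ _) i.isLt⟩ = false))).card
          - 2 * (a && a').toNat) ∧
    (Finset.univ.filter (fun v : Fin t → Bool =>
        iota v = K ∧ v ⟨0, by omega⟩ = a ∧ v ⟨t - 1, by omega⟩ = a' ∧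
        iota (fun i => xor (v i) (v ⟨(i.val + 1) % t, Nat.mod_lt _ (by omega)⟩)) = 2 * n)).card =
      Ccomp K (n + (a && a').toNat) * Ccomp (t - K) (n + (!a && !a').toNat) := by
  obtain ⟨s, rfl⟩ : ∃ s, t = s + 2 := ⟨t - 2, by omega⟩
  have p0 : (0:ℕ) < s + 2 := Nat.succ_pos _
  have ps : s + 1 < s + 2 := Nat.lt_succ_self _
  have hfun : ∀ v : Fin (s+2) → Bool,
      (fun i : Fin (s+2) => xor (v i) (v ⟨(i.val + 1) % (s+2), Nat.mod_lt _ p0⟩))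
        = (fun i => xor (v i) (v (i + 1))) := by
    intro v
    funext i
    rw [mk_mod]
  have hcard : ∀ v : Fin (s+2) → Bool, runs true v
      = (Finset.univ.filter (fun i : Fin (s+2) => v i = true ∧
          (i.val = 0 ∨ v ⟨i.val - 1, Nat.lt_of_le_of_lt (Nat.sub_le _ _) i.isLt⟩ = false))).card := by
    intro v
    rw [runs]
    simp only [Bool.not_true]
  constructor
  · intro v h1 h2 h3
    have hv0 : v 0 = a := ((congrArg v (zero_eq p0)).symm.trans h2 : _)
    have hvl : v ⟨s+1, ps⟩ = a' := (vcast v ps (by omega) rfl).trans h3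
    rw [hfun v, iota_xor v, ← hcard v, runs_eq_Ccyc true v]
    have hite : (if v 0 = true ∧ v ⟨s+1, by omega⟩ = true then 1 else 0) = (a && a').toNat := by
      rw [hv0, show v ⟨s+1, by omega⟩ = a' from (vcast v _ ps rfl).trans hvl]
      cases a <;> cases a' <;> simp
    rw [hite]
    have h5 := Ccyc_tf v
    omega
  · have hsets : (Finset.univ.filter (fun v : Fin (s+2) → Bool =>
        iota v = K ∧ v ⟨0, by omega⟩ = a ∧ v ⟨s + 2 - 1, by omega⟩ = a' ∧
        iota (fun i => xor (v i) (v ⟨(i.val + 1) % (s+2), Nat.mod_lt _ (by omega)⟩)) = 2 * n))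
        = (Finset.univ.filter (fun v : Fin (s+2) → Bool =>
        iota v = K ∧ v ⟨0, by omega⟩ = a ∧ v ⟨s + 2 - 1, by omega⟩ = a' ∧
        runs true v = n + (a && a').toNat ∧ runs false v = n + ((!a) && (!a')).toNat)) := by
      apply Finset.filter_congr
      intro v _
      have hE : iota (fun i => xor (v i) (v ⟨(i.val + 1) % (s+2), Nat.mod_lt _ p0⟩))
          = Ccyc true v + Ccyc false v := by rw [hfun v, iota_xor v]
      have h5 := Ccyc_tf v
      have h6t := runs_eq_Ccyc true v
      have h6f := runs_eq_Ccyc false v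
      constructor
      · rintro ⟨h1, h2, h3, h4⟩
        have hv0 : v 0 = a := ((congrArg v (zero_eq p0)).symm.trans h2 : _)
        have hvl : v ⟨s+1, ps⟩ = a' := (vcast v ps (by omega) rfl).trans h3
        rw [hE] at h4
        rw [hv0, hvl] at h6t h6f
        have et : (if a = true ∧ a' = true then 1 else 0) = (a && a').toNat := by
          cases a <;> cases a' <;> simp
        have ef : (if a = false ∧ a' = false then 1 else 0) = ((!a) && (!a')).toNat := by
          cases a <;> cases a' <;> simp
        rw [et] at h6t
        rw [ef] at h6f
        exact ⟨h1, h2, h3, by omega, by omega⟩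
      · rintro ⟨h1, h2, h3, h4t, h4f⟩
        have hv0 : v 0 = a := ((congrArg v (zero_eq p0)).symm.trans h2 : _)
        have hvl : v ⟨s+1, ps⟩ = a' := (vcast v ps (by omega) rfl).trans h3
        rw [hv0, hvl] at h6t h6f
        have et : (if a = true ∧ a' = true then 1 else 0) = (a && a').toNat := by
          cases a <;> cases a' <;> simp
        rw [et] at h6t
        refine ⟨h1, h2, h3, ?_⟩
        rw [hE]
        omega
    rw [hsets]
    have hcon : (n + (a && a').toNat) + 1 = (n + ((!a) && (!a')).toNat) + a.toNat + a'.toNat := by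
      cases a <;> cases a' <;> simp
    exact core (s+2) (by omega) K hK a a' _ _ hcon
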